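/- Let G be a simple bipartite graph with e edges. Then ρ(G) ≤ sqrt(e), with equality if and only if G is a disjoint union of a complete bipartite graph and isolated vertices. -/

import Mathlib

open Finset

noncomputable def specRad {V : Type*} [Fintype V] (G : SimpleGraph V) : ℝ :=
  letI := Classical.decEq V
  letI := Classical.decRel G.Adj
  sSup (spectrum ℝ (G.adjMatrix ℝ))

namespace Stmt17Aux

variable {V : Type*} [Fintype V] [DecidableEq V] (G : SimpleGraph V) [DecidableRel G.Adj]

lemma specRad_eq : specRad G = sSup (spectrum ℝ (G.adjMatrix ℝ)) := by
  unfold specRad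
  congr!

lemma adj_nonneg (x y : V) : 0 ≤ (G.adjMatrix ℝ) x y := by
  simp only [SimpleGraph.adjMatrix_apply]; split_ifs <;> norm_num

lemma adj_sq (x y : V) : (G.adjMatrix ℝ) x y * (G.adjMatrix ℝ) x y = (G.adjMatrix ℝ) x y := by
  simp only [SimpleGraph.adjMatrix_apply]; split_ifs <;> norm_num

lemma adj_symm (x y : V) : (G.adjMatrix ℝ) x y = (G.adjMatrix ℝ) y x := by
  rw [← Matrix.transpose_apply (G.adjMatrix ℝ), SimpleGraph.transpose_adjMatrix]

lemma adj_mul_le' (x y : V) (r : ℝ) (hr : 0 ≤ r) : (G.adjMatrix ℝ) x y * r ≤ r := by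
  have h1 : (G.adjMatrix ℝ) x y ≤ 1 := by
    simp only [SimpleGraph.adjMatrix_apply]; split_ifs <;> norm_num
  nlinarith

lemma adj_le_one (x y : V) : (G.adjMatrix ℝ) x y ≤ 1 := by
  simp only [SimpleGraph.adjMatrix_apply]; split_ifs <;> norm_num

lemma eigenvector_of_mem_spectrum (μ : ℝ) (h : μ ∈ spectrum ℝ (G.adjMatrix ℝ)) :
    ∃ v : V → ℝ, v ≠ 0 ∧ (G.adjMatrix ℝ).mulVec v = μ • v := by
  rw [spectrum.mem_iff] at h
  rw [Matrix.isUnit_iff_isUnit_det, isUnit_iff_ne_zero, not_not] at h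
  obtain ⟨v, hv0, hv⟩ := (Matrix.exists_mulVec_eq_zero_iff).mpr h
  refine ⟨v, hv0, ?_⟩
  rw [Matrix.sub_mulVec, sub_eq_zero] at hv
  rw [← hv, Matrix.algebraMap_eq_diagonal]
  ext x
  simp [Matrix.mulVec_diagonal]

lemma mem_spectrum_of_eigenvector (μ : ℝ) (v : V → ℝ) (hv0 : v ≠ 0)
    (hv : (G.adjMatrix ℝ).mulVec v = μ • v) : μ ∈ spectrum ℝ (G.adjMatrix ℝ) := by
  rw [spectrum.mem_iff, Matrix.isUnit_iff_isUnit_det, isUnit_iff_ne_zero, not_not]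
  rw [← Matrix.exists_mulVec_eq_zero_iff]
  refine ⟨v, hv0, ?_⟩
  rw [Matrix.sub_mulVec, sub_eq_zero, hv, Matrix.algebraMap_eq_diagonal]
  ext x
  simp [Matrix.mulVec_diagonal]

lemma sum_adj_total :
    ∑ x, ∑ y, (G.adjMatrix ℝ) x y = 2 * (G.edgeFinset.card : ℝ) := by
  have hdeg : ∀ x : V, ∑ y, (G.adjMatrix ℝ) x y = (G.degree x : ℝ) := by
    intro x
    simp [SimpleGraph.adjMatrix_apply, Finset.sum_boole, SimpleGraph.degree,
      SimpleGraph.neighborFinset_eq_filter]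
  rw [Finset.sum_congr rfl fun x _ => hdeg x, ← Nat.cast_sum,
    SimpleGraph.sum_degrees_eq_twice_card_edges]
  push_cast; ring

section colors
variable {c : V → Fin 2} (hc : ∀ x y, G.Adj x y → c x ≠ c y)

include hc in
lemma double_sum_split (f : V → V → ℝ) (hf : ∀ x y, ¬ G.Adj x y → f x y = 0)
    (hsymm : ∀ x y, f x y = f y x) :
    ∑ x, ∑ y, f x y =
      2 * ∑ p ∈ (univ.filter (fun x => c x = 0)) ×ˢ (univ.filter (fun x => c x ≠ 0)), f p.1 p.2 := by
  have fin2 : ∀ a : Fin 2, a ≠ 0 → a = 1 := by decide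
  have hST : ∀ x y : V, c x = c y → f x y = 0 := fun x y h => hf x y (fun ha => hc x y ha h)
  have h1 : ∑ x, ∑ y, f x y = ∑ x ∈ univ.filter (fun x => c x = 0), ∑ y, f x y
      + ∑ x ∈ univ.filter (fun x => ¬ c x = 0), ∑ y, f x y :=
    (Finset.sum_filter_add_sum_filter_not univ _ _).symm
  have h2 : ∀ x ∈ univ.filter (fun x => c x = 0), ∑ y, f x y
      = ∑ y ∈ univ.filter (fun y => ¬ c y = 0), f x y := by
    intro x hx
    rw [← Finset.sum_filter_add_sum_filter_not univ (fun y => ¬ c y = 0) (f x)]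
    simp only [mem_filter, mem_univ, true_and] at hx
    have : ∑ y ∈ univ.filter (fun y => ¬¬ c y = 0), f x y = 0 := by
      apply Finset.sum_eq_zero; intro y hy
      simp only [mem_filter, mem_univ, true_and, not_not] at hy
      exact hST x y (hx.trans hy.symm)
    rw [this, add_zero]
  have h3 : ∀ x ∈ univ.filter (fun x => ¬ c x = 0), ∑ y, f x y
      = ∑ y ∈ univ.filter (fun y => c y = 0), f x y := by
    intro x hx
    rw [← Finset.sum_filter_add_sum_filter_not univ (fun y => c y = 0) (f x)]
    simp only [mem_filter, mem_univ, true_and] at hx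
    have : ∑ y ∈ univ.filter (fun y => ¬ c y = 0), f x y = 0 := by
      apply Finset.sum_eq_zero; intro y hy
      simp only [mem_filter, mem_univ, true_and] at hy
      exact hST x y ((fin2 _ hx).trans (fin2 _ hy).symm)
    rw [this, add_zero]
  rw [h1, Finset.sum_congr rfl h2, Finset.sum_congr rfl h3, Finset.sum_product]
  have e2 : ∑ x ∈ univ.filter (fun x => ¬ c x = 0), ∑ y ∈ univ.filter (fun y => c y = 0), f x y
      = ∑ x ∈ univ.filter (fun x => c x = 0), ∑ y ∈ univ.filter (fun y => ¬ c y = 0), f x y := by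
    rw [Finset.sum_comm]
    exact Finset.sum_congr rfl fun y _ => Finset.sum_congr rfl fun x _ => hsymm _ _
  rw [e2]
  ring

include hc in
lemma sum_adj_ST :
    ∑ p ∈ (univ.filter (fun x => c x = 0)) ×ˢ (univ.filter (fun x => c x ≠ 0)),
      (G.adjMatrix ℝ) p.1 p.2 = (G.edgeFinset.card : ℝ) := by
  have key := double_sum_split G hc (fun x y => (G.adjMatrix ℝ) x y)
    (fun x y h => by simp [SimpleGraph.adjMatrix_apply, h])
    (fun x y => adj_symm G x y)
  have tot := sum_adj_total G
  rw [tot] at key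
  linarith

-- Cauchy–Schwarz step
include hc in
lemma cs_step (w : V → ℝ) :
    (∑ p ∈ (univ.filter (fun x => c x = 0)) ×ˢ (univ.filter (fun x => c x ≠ 0)),
        (G.adjMatrix ℝ) p.1 p.2 * (w p.1 * w p.2)) ^ 2
      ≤ (G.edgeFinset.card : ℝ) *
        ∑ p ∈ (univ.filter (fun x => c x = 0)) ×ˢ (univ.filter (fun x => c x ≠ 0)),
          (G.adjMatrix ℝ) p.1 p.2 * (w p.1 ^ 2 * w p.2 ^ 2) := by
  set s := (univ.filter (fun x => c x = 0)) ×ˢ (univ.filter (fun x => c x ≠ 0)) with hs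
  have cs := Finset.sum_mul_sq_le_sq_mul_sq s (fun p => (G.adjMatrix ℝ) p.1 p.2)
    (fun p => (G.adjMatrix ℝ) p.1 p.2 * (w p.1 * w p.2))
  have e1 : ∑ p ∈ s, (G.adjMatrix ℝ) p.1 p.2 * ((G.adjMatrix ℝ) p.1 p.2 * (w p.1 * w p.2))
      = ∑ p ∈ s, (G.adjMatrix ℝ) p.1 p.2 * (w p.1 * w p.2) := by
    refine Finset.sum_congr rfl fun p _ => ?_
    rw [← mul_assoc, adj_sq]
  have e2 : ∑ p ∈ s, ((G.adjMatrix ℝ) p.1 p.2) ^ 2 = ∑ p ∈ s, (G.adjMatrix ℝ) p.1 p.2 := by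
    refine Finset.sum_congr rfl fun p _ => ?_
    rw [sq, adj_sq]
  have e3 : ∑ p ∈ s, ((G.adjMatrix ℝ) p.1 p.2 * (w p.1 * w p.2)) ^ 2
      = ∑ p ∈ s, (G.adjMatrix ℝ) p.1 p.2 * (w p.1 ^ 2 * w p.2 ^ 2) := by
    refine Finset.sum_congr rfl fun p _ => ?_
    rw [mul_pow, sq ((G.adjMatrix ℝ) p.1 p.2), adj_sq]
    ring
  rw [e1, e2, e3, sum_adj_ST G hc] at cs
  exact cs

-- termwise bound toward P*Q
include hc in
lemma q2_le (w : V → ℝ) :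
    ∑ p ∈ (univ.filter (fun x => c x = 0)) ×ˢ (univ.filter (fun x => c x ≠ 0)),
        (G.adjMatrix ℝ) p.1 p.2 * (w p.1 ^ 2 * w p.2 ^ 2)
      ≤ (∑ x ∈ univ.filter (fun x => c x = 0), w x ^ 2)
        * (∑ y ∈ univ.filter (fun y => c y ≠ 0), w y ^ 2) := by
  rw [Finset.sum_mul_sum]
  rw [← Finset.sum_product']
  apply Finset.sum_le_sum
  intro p _
  have h1 := adj_le_one G p.1 p.2
  have h0 := adj_nonneg G p.1 p.2
  nlinarith [sq_nonneg (w p.1), sq_nonneg (w p.2), sq_nonneg (w p.1 * w p.2)]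

-- main bound on the half-sum
include hc in
lemma half_bound (w : V → ℝ) (hw1 : ∑ x, w x ^ 2 = 1) :
    ∑ p ∈ (univ.filter (fun x => c x = 0)) ×ˢ (univ.filter (fun x => c x ≠ 0)),
        (G.adjMatrix ℝ) p.1 p.2 * (w p.1 * w p.2)
      ≤ Real.sqrt (G.edgeFinset.card : ℝ) / 2 := by
  set P := ∑ x ∈ univ.filter (fun x => c x = 0), w x ^ 2 with hP
  set Q := ∑ y ∈ univ.filter (fun y => c y ≠ 0), w y ^ 2 with hQ
  have hPQ1 : P + Q = 1 := by
    rw [hP, hQ, Finset.sum_filter_add_sum_filter_not univ _ (fun x => w x ^ 2), hw1]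
  have hPQ : P * Q ≤ 1 / 4 := by nlinarith [sq_nonneg (P - Q)]
  have h1 := cs_step G hc w
  have h2 := q2_le G hc w
  set e' := (G.edgeFinset.card : ℝ) with he'
  have he0 : (0:ℝ) ≤ e' := Nat.cast_nonneg _
  set q1 := ∑ p ∈ (univ.filter (fun x => c x = 0)) ×ˢ (univ.filter (fun x => c x ≠ 0)),
        (G.adjMatrix ℝ) p.1 p.2 * (w p.1 * w p.2)
  have h3 : q1 ^ 2 ≤ e' * (1/4) := by nlinarith
  have h4 : q1 ≤ Real.sqrt (e' * (1/4)) := by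
    calc q1 ≤ |q1| := le_abs_self _
    _ = Real.sqrt (q1 ^ 2) := (Real.sqrt_sq_eq_abs q1).symm
    _ ≤ Real.sqrt (e' * (1/4)) := Real.sqrt_le_sqrt h3
  calc q1 ≤ Real.sqrt (e' * (1/4)) := h4
  _ = Real.sqrt e' / 2 := by
      rw [Real.sqrt_mul he0, show (1/4:ℝ) = (1/2)^2 by norm_num,
        Real.sqrt_sq (by norm_num : (0:ℝ) ≤ 1/2)]
      ring

include hc in
lemma vAv_eq (v : V → ℝ) (μ : ℝ) (hv : (G.adjMatrix ℝ).mulVec v = μ • v) :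
    ∑ x, ∑ y, (G.adjMatrix ℝ) x y * v x * v y = μ * ∑ x, v x ^ 2 := by
  have : ∀ x, ∑ y, (G.adjMatrix ℝ) x y * v y = μ * v x := by
    intro x
    have := congrFun hv x
    simpa [Matrix.mulVec, dotProduct] using this
  calc ∑ x, ∑ y, (G.adjMatrix ℝ) x y * v x * v y
      = ∑ x, v x * ∑ y, (G.adjMatrix ℝ) x y * v y := by
        refine Finset.sum_congr rfl fun x _ => ?_
        rw [Finset.mul_sum]
        exact Finset.sum_congr rfl fun y _ => by ring
    _ = ∑ x, v x * (μ * v x) := Finset.sum_congr rfl fun x _ => by rw [this x]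
    _ = μ * ∑ x, v x ^ 2 := by rw [Finset.mul_sum]; exact Finset.sum_congr rfl fun x _ => by ring

include hc in
lemma spec_le (μ : ℝ) (hμ : μ ∈ spectrum ℝ (G.adjMatrix ℝ)) :
    μ ≤ Real.sqrt (G.edgeFinset.card : ℝ) := by
  obtain ⟨v, hv0, hv⟩ := eigenvector_of_mem_spectrum G μ hμ
  set n2 := ∑ x, v x ^ 2 with hn2
  have hn2pos : 0 < n2 := by
    obtain ⟨x, hx⟩ := Function.ne_iff.mp hv0
    exact Finset.sum_pos' (fun i _ => sq_nonneg _) ⟨x, Finset.mem_univ x, by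
      have h1 : 0 < |v x| := abs_pos.mpr hx
      nlinarith [sq_abs (v x)]⟩
  set w : V → ℝ := fun x => |v x| / Real.sqrt n2 with hw
  have hw1 : ∑ x, w x ^ 2 = 1 := by
    have : ∀ x, w x ^ 2 = v x ^ 2 / n2 := by
      intro x
      rw [hw]
      rw [div_pow, sq_abs, Real.sq_sqrt hn2pos.le]
    rw [Finset.sum_congr rfl fun x _ => this x, ← Finset.sum_div, ← hn2,
      div_self hn2pos.ne']
  have key1 : μ * n2 = ∑ x, ∑ y, (G.adjMatrix ℝ) x y * v x * v y :=
    (vAv_eq G hc v μ hv).symm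
  have key2 : ∑ x, ∑ y, (G.adjMatrix ℝ) x y * v x * v y
      ≤ ∑ x, ∑ y, (G.adjMatrix ℝ) x y * (w x * w y) * n2 := by
    apply Finset.sum_le_sum; intro x _
    apply Finset.sum_le_sum; intro y _
    have : (G.adjMatrix ℝ) x y * (w x * w y) * n2 = (G.adjMatrix ℝ) x y * (|v x| * |v y|) := by
      rw [hw]
      dsimp only
      rw [div_mul_div_comm, Real.mul_self_sqrt hn2pos.le]
      field_simp
    rw [this, mul_assoc]
    refine mul_le_mul_of_nonneg_left ?_ (adj_nonneg G x y)
    calc v x * v y ≤ |v x * v y| := le_abs_self _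
    _ = |v x| * |v y| := abs_mul _ _
  have key3 : ∑ x, ∑ y, (G.adjMatrix ℝ) x y * (w x * w y)
      = 2 * ∑ p ∈ (univ.filter (fun x => c x = 0)) ×ˢ (univ.filter (fun x => c x ≠ 0)),
          (G.adjMatrix ℝ) p.1 p.2 * (w p.1 * w p.2) :=
    double_sum_split G hc _ (fun x y h => by simp [SimpleGraph.adjMatrix_apply, h])
      (fun x y => by rw [adj_symm]; ring)
  have key4 := half_bound G hc w hw1
  have : μ * n2 ≤ Real.sqrt (G.edgeFinset.card : ℝ) * n2 := by
    calc μ * n2 ≤ ∑ x, ∑ y, (G.adjMatrix ℝ) x y * (w x * w y) * n2 := key1.le.trans key2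
    _ = (∑ x, ∑ y, (G.adjMatrix ℝ) x y * (w x * w y)) * n2 := by
        rw [Finset.sum_mul]
        exact Finset.sum_congr rfl fun x _ => by rw [Finset.sum_mul]
    _ ≤ Real.sqrt (G.edgeFinset.card : ℝ) * n2 := by
        apply mul_le_mul_of_nonneg_right _ hn2pos.le
        rw [key3]
        linarith
  exact le_of_mul_le_mul_right (by linarith) hn2pos

set_option maxHeartbeats 2000000 in
include hc in
lemma complete_of_eq (hne : G.edgeFinset.card ≠ 0)
    (heq : sSup (spectrum ℝ (G.adjMatrix ℝ)) = Real.sqrt (G.edgeFinset.card : ℝ)) :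
    ∃ S T : Set V, Disjoint S T ∧
      ∀ x y : V, G.Adj x y ↔ (x ∈ S ∧ y ∈ T) ∨ (x ∈ T ∧ y ∈ S) := by
  classical
  have he'pos : (0:ℝ) < (G.edgeFinset.card : ℝ) := by
    exact_mod_cast Nat.pos_of_ne_zero hne
  -- V is nonempty
  obtain ⟨ed, hed⟩ := Finset.card_pos.mp (Nat.pos_of_ne_zero hne)
  have hVne : Nonempty V := ⟨ed.out.1⟩
  -- sqrt e is in the spectrum
  have hHerm : (G.adjMatrix ℝ).IsHermitian := by
    rw [Matrix.IsHermitian, Matrix.conjTranspose_eq_transpose_of_trivial]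
    exact G.transpose_adjMatrix
  have hspec_ne : (spectrum ℝ (G.adjMatrix ℝ)).Nonempty :=
    ⟨hHerm.eigenvalues (Classical.arbitrary V), hHerm.eigenvalues_mem_spectrum_real _⟩
  have hmem : Real.sqrt (G.edgeFinset.card : ℝ) ∈ spectrum ℝ (G.adjMatrix ℝ) := by
    rw [← heq]
    exact hspec_ne.csSup_mem (Matrix.finite_spectrum _)
  -- eigenvector and its normalized absolute value
  obtain ⟨v, hv0, hv⟩ := eigenvector_of_mem_spectrum G _ hmem
  have hn2pos : 0 < ∑ x, v x ^ 2 := by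
    obtain ⟨x, hx⟩ := Function.ne_iff.mp hv0
    refine Finset.sum_pos' (fun i _ => sq_nonneg _) ⟨x, Finset.mem_univ x, ?_⟩
    have h1 : 0 < |v x| := abs_pos.mpr hx
    nlinarith [sq_abs (v x)]
  set n2 := ∑ x, v x ^ 2 with hn2
  set w : V → ℝ := fun x => |v x| / Real.sqrt n2 with hw
  have hwnn : ∀ x, 0 ≤ w x := fun x => div_nonneg (abs_nonneg _) (Real.sqrt_nonneg _)
  have hw1 : ∑ x, w x ^ 2 = 1 := by
    have : ∀ x, w x ^ 2 = v x ^ 2 / n2 := by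
      intro x
      rw [hw]
      rw [div_pow, sq_abs, Real.sq_sqrt hn2pos.le]
    rw [Finset.sum_congr rfl fun x _ => this x, ← Finset.sum_div, ← hn2,
      div_self hn2pos.ne']
  -- facts stated before abbreviations
  have key1 : Real.sqrt (G.edgeFinset.card : ℝ) * n2
      = ∑ x, ∑ y, (G.adjMatrix ℝ) x y * v x * v y := (vAv_eq G hc v _ hv).symm
  have key2 : ∑ x, ∑ y, (G.adjMatrix ℝ) x y * v x * v y
      ≤ ∑ x, ∑ y, (G.adjMatrix ℝ) x y * (w x * w y) * n2 := by
    apply Finset.sum_le_sum; intro x _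
    apply Finset.sum_le_sum; intro y _
    have : (G.adjMatrix ℝ) x y * (w x * w y) * n2 = (G.adjMatrix ℝ) x y * (|v x| * |v y|) := by
      rw [hw]
      dsimp only
      rw [div_mul_div_comm, Real.mul_self_sqrt hn2pos.le]
      field_simp
    rw [this, mul_assoc]
    refine mul_le_mul_of_nonneg_left ?_ (adj_nonneg G x y)
    calc v x * v y ≤ |v x * v y| := le_abs_self _
    _ = |v x| * |v y| := abs_mul _ _
  have key3 : ∑ x, ∑ y, (G.adjMatrix ℝ) x y * (w x * w y)
      = 2 * ∑ p ∈ (univ.filter (fun x => c x = 0)) ×ˢ (univ.filter (fun x => c x ≠ 0)),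
          (G.adjMatrix ℝ) p.1 p.2 * (w p.1 * w p.2) :=
    double_sum_split G hc _ (fun x y h => by simp [SimpleGraph.adjMatrix_apply, h])
      (fun x y => by rw [adj_symm]; ring)
  have hq1le := half_bound G hc w hw1
  have hcs := cs_step G hc w
  have hq2le := q2_le G hc w
  have hsumfull := sum_adj_ST G hc
  have hPQ1 : (∑ x ∈ univ.filter (fun x => c x = 0), w x ^ 2)
      + (∑ y ∈ univ.filter (fun y => c y ≠ 0), w y ^ 2) = 1 := by
    rw [← hw1]
    exact Finset.sum_filter_add_sum_filter_not univ _ (fun x => w x ^ 2)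
  -- abbreviations
  set e' := (G.edgeFinset.card : ℝ) with he'
  set Sf := (univ.filter (fun x : V => c x = 0)) with hSf
  set Tf := (univ.filter (fun x : V => c x ≠ 0)) with hTf
  set q1 := ∑ p ∈ Sf ×ˢ Tf, (G.adjMatrix ℝ) p.1 p.2 * (w p.1 * w p.2) with hq1def
  set q2 := ∑ p ∈ Sf ×ˢ Tf, (G.adjMatrix ℝ) p.1 p.2 * (w p.1 ^ 2 * w p.2 ^ 2) with hq2def
  set P := ∑ x ∈ Sf, w x ^ 2 with hP
  set Q := ∑ y ∈ Tf, w y ^ 2 with hQ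
  -- value of q1
  have hq1ge : Real.sqrt e' ≤ 2 * q1 := by
    have h1 : Real.sqrt e' * n2 ≤ (2 * q1) * n2 := by
      calc Real.sqrt e' * n2 ≤ ∑ x, ∑ y, (G.adjMatrix ℝ) x y * (w x * w y) * n2 :=
        key1.le.trans key2
      _ = (∑ x, ∑ y, (G.adjMatrix ℝ) x y * (w x * w y)) * n2 := by
          rw [Finset.sum_mul]
          exact Finset.sum_congr rfl fun x _ => by rw [Finset.sum_mul]
      _ = (2 * q1) * n2 := by rw [key3]
    exact le_of_mul_le_mul_right h1 hn2pos
  have hq1 : q1 = Real.sqrt e' / 2 := by linarith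
  -- the chain of equalities
  have hq2ge : 1 / 4 ≤ q2 := by
    rw [hq1, div_pow, Real.sq_sqrt he'pos.le] at hcs
    nlinarith
  have hPQ : P * Q ≤ 1 / 4 := by nlinarith [sq_nonneg (P - Q)]
  have hq2 : q2 = P * Q := by linarith
  have hPhalf : P = 1 / 2 := by nlinarith [sq_nonneg (P - Q)]
  have hQhalf : Q = 1 / 2 := by linarith
  -- termwise equality
  have hPQsum : P * Q = ∑ p ∈ Sf ×ˢ Tf, w p.1 ^ 2 * w p.2 ^ 2 := by
    rw [hP, hQ, Finset.sum_mul_sum, ← Finset.sum_product']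
  have hterm : ∀ p ∈ Sf ×ˢ Tf,
      (G.adjMatrix ℝ) p.1 p.2 * (w p.1 ^ 2 * w p.2 ^ 2) = w p.1 ^ 2 * w p.2 ^ 2 := by
    have hle : ∀ p ∈ Sf ×ˢ Tf,
        (G.adjMatrix ℝ) p.1 p.2 * (w p.1 ^ 2 * w p.2 ^ 2) ≤ w p.1 ^ 2 * w p.2 ^ 2 := by
      intro p _
      exact adj_mul_le' G p.1 p.2 _ (by positivity)
    have hsum_eq2 : q2 = ∑ p ∈ Sf ×ˢ Tf, w p.1 ^ 2 * w p.2 ^ 2 := by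
      rw [hq2, hPQsum]
    intro p hp
    exact ((Finset.sum_eq_sum_iff_of_le hle).mp (hq2def.symm.trans hsum_eq2) p hp)
  -- supports
  set Sf0 := (univ.filter (fun x => c x = 0 ∧ w x ≠ 0)) with hSf0
  set Tf0 := (univ.filter (fun x => c x ≠ 0 ∧ w x ≠ 0)) with hTf0
  have hsub : Sf0 ×ˢ Tf0 ⊆ Sf ×ˢ Tf := by
    intro p hp
    rw [Finset.mem_product] at hp ⊢
    simp only [hSf0, hTf0, hSf, hTf, Finset.mem_filter, Finset.mem_univ, true_and] at hp ⊢
    exact ⟨hp.1.1, hp.2.1⟩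
  -- all pairs in Sf0 × Tf0 are adjacent
  have hadj0 : ∀ p ∈ Sf0 ×ˢ Tf0, G.Adj p.1 p.2 := by
    intro p hp
    have hp' := hsub hp
    have := hterm p hp'
    rw [Finset.mem_product] at hp
    simp only [hSf0, hTf0, Finset.mem_filter, Finset.mem_univ, true_and] at hp
    by_contra hna
    rw [SimpleGraph.adjMatrix_apply, if_neg hna, zero_mul] at this
    have h1 : w p.1 ^ 2 ≠ 0 := pow_ne_zero _ hp.1.2
    have h2 : w p.2 ^ 2 ≠ 0 := pow_ne_zero _ hp.2.2
    exact (mul_ne_zero h1 h2) this.symm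
  have hA0 : ∀ p ∈ Sf0 ×ˢ Tf0, (G.adjMatrix ℝ) p.1 p.2 = 1 := by
    intro p hp
    rw [SimpleGraph.adjMatrix_apply, if_pos (hadj0 p hp)]
  set a := ((Sf0.card : ℝ)) with haa
  set b := ((Tf0.card : ℝ)) with hbb
  -- q1 restricted to supports
  have hPsupp : ∑ x ∈ Sf0, w x ^ 2 = P := by
    rw [hP]
    apply Finset.sum_subset
    · intro x hx
      simp only [hSf0, hSf, Finset.mem_filter, Finset.mem_univ, true_and] at hx ⊢
      exact hx.1
    · intro x hx hx0
      simp only [hSf, hSf0, Finset.mem_filter, Finset.mem_univ, true_and] at hx hx0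
      have : w x = 0 := by
        by_contra hcon
        exact hx0 ⟨hx, hcon⟩
      rw [this]
      ring
  have hQsupp : ∑ x ∈ Tf0, w x ^ 2 = Q := by
    rw [hQ]
    apply Finset.sum_subset
    · intro x hx
      simp only [hTf0, hTf, Finset.mem_filter, Finset.mem_univ, true_and] at hx ⊢
      exact hx.1
    · intro x hx hx0
      simp only [hTf, hTf0, Finset.mem_filter, Finset.mem_univ, true_and] at hx hx0
      have : w x = 0 := by
        by_contra hcon
        exact hx0 ⟨hx, hcon⟩
      rw [this]
      ring
  have hq1supp : q1 = (∑ x ∈ Sf0, w x) * (∑ y ∈ Tf0, w y) := by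
    rw [hq1def]
    have hzero : ∀ p ∈ Sf ×ˢ Tf, p ∉ Sf0 ×ˢ Tf0 →
        (G.adjMatrix ℝ) p.1 p.2 * (w p.1 * w p.2) = 0 := by
      intro p hp hp0
      rw [Finset.mem_product] at hp
      simp only [hSf, hTf, Finset.mem_filter, Finset.mem_univ, true_and] at hp
      have : w p.1 = 0 ∨ w p.2 = 0 := by
        by_contra hcon
        push_neg at hcon
        apply hp0
        rw [Finset.mem_product]
        simp only [hSf0, hTf0, Finset.mem_filter, Finset.mem_univ, true_and]
        exact ⟨⟨hp.1, hcon.1⟩, ⟨hp.2, hcon.2⟩⟩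
      rcases this with h | h <;> rw [h] <;> ring
    rw [← Finset.sum_subset hsub hzero]
    rw [Finset.sum_congr rfl (fun p hp => by rw [hA0 p hp, one_mul]),
      Finset.sum_mul_sum, ← Finset.sum_product']
  -- Cauchy-Schwarz on the supports
  have hcsS : (∑ x ∈ Sf0, w x) ^ 2 ≤ a * (1 / 2) := by
    have := Finset.sum_mul_sq_le_sq_mul_sq Sf0 (fun _ => (1:ℝ)) w
    simp only [one_mul, one_pow] at this
    rw [Finset.sum_const, nsmul_eq_mul, mul_one] at this
    rw [hPsupp, hPhalf] at this
    exact this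
  have hcsT : (∑ x ∈ Tf0, w x) ^ 2 ≤ b * (1 / 2) := by
    have := Finset.sum_mul_sq_le_sq_mul_sq Tf0 (fun _ => (1:ℝ)) w
    simp only [one_mul, one_pow] at this
    rw [Finset.sum_const, nsmul_eq_mul, mul_one] at this
    rw [hQsupp, hQhalf] at this
    exact this
  have hwS_nonneg : 0 ≤ ∑ x ∈ Sf0, w x := Finset.sum_nonneg fun x _ => hwnn x
  have hwT_nonneg : 0 ≤ ∑ x ∈ Tf0, w x := Finset.sum_nonneg fun x _ => hwnn x
  have hab_ge : e' ≤ a * b := by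
    have h1 : q1 ^ 2 = e' / 4 := by
      rw [hq1, div_pow, Real.sq_sqrt he'pos.le]
      norm_num
    have h2 : q1 ^ 2 ≤ (a * (1/2)) * (b * (1/2)) := by
      rw [hq1supp, mul_pow]
      exact mul_le_mul hcsS hcsT (sq_nonneg _) (by positivity)
    nlinarith
  -- edge count on supports
  have hsum0 : ∑ p ∈ Sf0 ×ˢ Tf0, (G.adjMatrix ℝ) p.1 p.2 = a * b := by
    rw [Finset.sum_congr rfl hA0, Finset.sum_const, nsmul_eq_mul, mul_one,
      Finset.card_product]
    rw [haa, hbb]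
    push_cast
    ring
  have hrest : ∑ p ∈ (Sf ×ˢ Tf) \ (Sf0 ×ˢ Tf0), (G.adjMatrix ℝ) p.1 p.2 = 0 := by
    have hsplit := Finset.sum_sdiff (f := fun p : V × V => (G.adjMatrix ℝ) p.1 p.2) hsub
    rw [hsum0, hsumfull] at hsplit
    have hnn : 0 ≤ ∑ p ∈ (Sf ×ˢ Tf) \ (Sf0 ×ˢ Tf0), (G.adjMatrix ℝ) p.1 p.2 :=
      Finset.sum_nonneg fun p _ => adj_nonneg G p.1 p.2
    linarith
  have hnoedge : ∀ p ∈ (Sf ×ˢ Tf) \ (Sf0 ×ˢ Tf0), (G.adjMatrix ℝ) p.1 p.2 = 0 :=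
    (Finset.sum_eq_zero_iff_of_nonneg fun p _ => adj_nonneg G p.1 p.2).mp hrest
  -- final construction
  refine ⟨{x | c x = 0 ∧ w x ≠ 0}, {x | c x ≠ 0 ∧ w x ≠ 0}, ?_, ?_⟩
  · rw [Set.disjoint_left]
    rintro x ⟨h1, -⟩ ⟨h2, -⟩
    exact h2 h1
  · intro x y
    constructor
    · intro hxy
      have key : ∀ x' y', G.Adj x' y' → c x' = 0 →
          (x' ∈ {x | c x = 0 ∧ w x ≠ 0} ∧ y' ∈ {x | c x ≠ 0 ∧ w x ≠ 0}) := by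
        intro x' y' hxy' hcx'
        have hcy' : c y' ≠ 0 := fun h => (hc x' y' hxy') (hcx'.trans h.symm)
        have hpfull : (x', y') ∈ Sf ×ˢ Tf := by
          rw [Finset.mem_product]
          simp only [hSf, hTf, Finset.mem_filter, Finset.mem_univ, true_and]
          exact ⟨hcx', hcy'⟩
        have hp0 : (x', y') ∈ Sf0 ×ˢ Tf0 := by
          by_contra hcon
          have := hnoedge (x', y') (Finset.mem_sdiff.mpr ⟨hpfull, hcon⟩)
          rw [SimpleGraph.adjMatrix_apply, if_pos hxy'] at this
          norm_num at this
        rw [Finset.mem_product] at hp0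
        simp only [hSf0, hTf0, Finset.mem_filter, Finset.mem_univ, true_and] at hp0
        exact ⟨hp0.1, hp0.2⟩
      by_cases hcx : c x = 0
      · exact Or.inl (key x y hxy hcx)
      · have fin2 : ∀ d : Fin 2, d ≠ 0 → d = 1 := by decide
        have hcy : c y = 0 := by
          by_contra hcy
          exact (hc x y hxy) ((fin2 _ hcx).trans (fin2 _ hcy).symm)
        have := key y x (G.adj_symm hxy) hcy
        exact Or.inr ⟨this.2, this.1⟩
    · rintro (⟨hx, hy⟩ | ⟨hx, hy⟩)
      · exact hadj0 (x, y) (by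
          rw [Finset.mem_product]
          simp only [hSf0, hTf0, Finset.mem_filter, Finset.mem_univ, true_and]
          exact ⟨⟨hx.1, hx.2⟩, ⟨hy.1, hy.2⟩⟩)
      · exact G.adj_symm (hadj0 (y, x) (by
          rw [Finset.mem_product]
          simp only [hSf0, hTf0, Finset.mem_filter, Finset.mem_univ, true_and]
          exact ⟨⟨hy.1, hy.2⟩, ⟨hx.1, hx.2⟩⟩))

end colors

lemma specRad_le (hbip : G.Colorable 2) :
    specRad G ≤ Real.sqrt (G.edgeFinset.card : ℝ) := by
  obtain ⟨C⟩ := hbip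
  rw [specRad_eq]
  rcases (spectrum ℝ (G.adjMatrix ℝ)).eq_empty_or_nonempty with h | h
  · rw [h, Real.sSup_empty]; positivity
  · exact csSup_le h (fun μ hμ => spec_le G (fun x y ha => C.valid ha) μ hμ)

lemma specRad_zero_of_bot (hG : ∀ x y : V, ¬ G.Adj x y) : specRad G = 0 := by
  rw [specRad_eq]
  have hA : G.adjMatrix ℝ = 0 := by
    ext x y
    simp [SimpleGraph.adjMatrix_apply, hG x y]
  rw [hA]
  rcases isEmpty_or_nonempty V with hV | hV
  · have hsub : Subsingleton (Matrix V V ℝ) :=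
      ⟨fun a b => funext fun x => isEmptyElim x⟩
    have : spectrum ℝ (0 : Matrix V V ℝ) = ∅ := by
      ext μ
      simp [spectrum.mem_iff, isUnit_of_subsingleton]
    rw [this, Real.sSup_empty]
  · rw [spectrum.zero_eq, csSup_singleton]

lemma card_eq_of_complete (S T : Set V) [DecidablePred (· ∈ S)] [DecidablePred (· ∈ T)]
    (hd : Disjoint S T)
    (hadj : ∀ x y, G.Adj x y ↔ (x ∈ S ∧ y ∈ T) ∨ (x ∈ T ∧ y ∈ S)) :
    (G.edgeFinset.card : ℝ)
      = (univ.filter (fun x => x ∈ S)).card * (univ.filter (fun x => x ∈ T)).card := by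
  have hm : ∀ x, ¬ (x ∈ S ∧ x ∈ T) := fun x hx => Set.disjoint_left.mp hd hx.1 hx.2
  have hterm : ∀ x y : V, (G.adjMatrix ℝ) x y
      = (if x ∈ S then (1:ℝ) else 0) * (if y ∈ T then (1:ℝ) else 0)
        + (if x ∈ T then (1:ℝ) else 0) * (if y ∈ S then (1:ℝ) else 0) := by
    intro x y
    simp only [SimpleGraph.adjMatrix_apply, hadj]
    by_cases h1 : x ∈ S <;> by_cases h2 : y ∈ T <;> by_cases h3 : x ∈ T <;>
      by_cases h4 : y ∈ S <;> simp [h1, h2, h3, h4] <;> tauto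
  have hsum : ∑ x, ∑ y, (G.adjMatrix ℝ) x y
      = 2 * (((univ.filter (fun x => x ∈ S)).card : ℝ)
          * ((univ.filter (fun x => x ∈ T)).card : ℝ)) := by
    rw [Finset.sum_congr rfl fun x _ => Finset.sum_congr rfl fun y _ => hterm x y]
    have hS : ∑ x : V, (if x ∈ S then (1:ℝ) else 0)
        = ((univ.filter (fun x => x ∈ S)).card : ℝ) := by
      rw [← Finset.sum_filter, Finset.sum_const, nsmul_eq_mul, mul_one]
    have hT : ∑ x : V, (if x ∈ T then (1:ℝ) else 0)
        = ((univ.filter (fun x => x ∈ T)).card : ℝ) := by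
      rw [← Finset.sum_filter, Finset.sum_const, nsmul_eq_mul, mul_one]
    simp only [Finset.sum_add_distrib, ← Finset.sum_mul, ← Finset.mul_sum]
    rw [hS, hT]
    ring
  have tot := sum_adj_total G
  rw [hsum] at tot
  linarith

lemma specRad_of_complete (hbip : G.Colorable 2) (S T : Set V) (hd : Disjoint S T)
    (hadj : ∀ x y, G.Adj x y ↔ (x ∈ S ∧ y ∈ T) ∨ (x ∈ T ∧ y ∈ S)) :
    specRad G = Real.sqrt (G.edgeFinset.card : ℝ) := by
  classical
  have hm : ∀ x, ¬ (x ∈ S ∧ x ∈ T) := fun x hx => Set.disjoint_left.mp hd hx.1 hx.2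
  set a := ((univ.filter (fun x => x ∈ S)).card : ℝ) with haa
  set b := ((univ.filter (fun x => x ∈ T)).card : ℝ) with hbb
  have hcount : (G.edgeFinset.card : ℝ) = a * b := card_eq_of_complete G S T hd hadj
  by_cases hab : a = 0 ∨ b = 0
  · have hbot : ∀ x y : V, ¬ G.Adj x y := by
      intro x y hxy
      have hnz : a ≠ 0 ∧ b ≠ 0 := by
        rcases (hadj x y).mp hxy with ⟨h1, h2⟩ | ⟨h1, h2⟩
        · exact ⟨Nat.cast_ne_zero.mpr (Finset.card_ne_zero_of_mem
              (Finset.mem_filter.mpr ⟨Finset.mem_univ x, h1⟩)),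
            Nat.cast_ne_zero.mpr (Finset.card_ne_zero_of_mem
              (Finset.mem_filter.mpr ⟨Finset.mem_univ y, h2⟩))⟩
        · exact ⟨Nat.cast_ne_zero.mpr (Finset.card_ne_zero_of_mem
              (Finset.mem_filter.mpr ⟨Finset.mem_univ y, h2⟩)),
            Nat.cast_ne_zero.mpr (Finset.card_ne_zero_of_mem
              (Finset.mem_filter.mpr ⟨Finset.mem_univ x, h1⟩))⟩
      tauto
    rw [specRad_zero_of_bot G hbot, hcount]
    rcases hab with h | h <;> rw [h] <;> simp
  · push_neg at hab
    have ha0 : (0:ℝ) < a := lt_of_le_of_ne (Nat.cast_nonneg _) (Ne.symm hab.1)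
    have hb0 : (0:ℝ) < b := lt_of_le_of_ne (Nat.cast_nonneg _) (Ne.symm hab.2)
    set v : V → ℝ := fun x => if x ∈ S then Real.sqrt b else if x ∈ T then Real.sqrt a else 0
      with hv
    have hrow_S : ∀ x ∈ S, ∀ y, (G.adjMatrix ℝ) x y = if y ∈ T then 1 else 0 := by
      intro x hx y
      simp only [SimpleGraph.adjMatrix_apply, hadj]
      by_cases h2 : y ∈ T
      · simp [h2, hx]
      · have : ¬ x ∈ T := fun h => hm x ⟨hx, h⟩
        simp [h2, this]
    have hrow_T : ∀ x ∈ T, ∀ y, (G.adjMatrix ℝ) x y = if y ∈ S then 1 else 0 := by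
      intro x hx y
      simp only [SimpleGraph.adjMatrix_apply, hadj]
      by_cases h2 : y ∈ S
      · simp [h2, hx]
      · have : ¬ x ∈ S := fun h => hm x ⟨h, hx⟩
        simp [h2, this]
    have hrow_0 : ∀ x, ¬ x ∈ S → ¬ x ∈ T → ∀ y, (G.adjMatrix ℝ) x y = 0 := by
      intro x hx1 hx2 y
      simp only [SimpleGraph.adjMatrix_apply, hadj]
      simp [hx1, hx2]
    have heig : (G.adjMatrix ℝ).mulVec v = Real.sqrt (G.edgeFinset.card : ℝ) • v := by
      ext x
      have hmv : (G.adjMatrix ℝ).mulVec v x = ∑ y, (G.adjMatrix ℝ) x y * v y := by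
        simp [Matrix.mulVec, dotProduct]
      rw [hcount, Real.sqrt_mul ha0.le]
      by_cases hx : x ∈ S
      · rw [hmv, Finset.sum_congr rfl fun y _ => by rw [hrow_S x hx y]]
        have : ∀ y : V, (if y ∈ T then (1:ℝ) else 0) * v y = if y ∈ T then Real.sqrt a else 0 := by
          intro y
          by_cases hy : y ∈ T
          · have : ¬ y ∈ S := fun h => hm y ⟨h, hy⟩
            simp [hy, hv, this]
          · simp [hy]
        rw [Finset.sum_congr rfl fun y _ => this y, ← Finset.sum_filter,
          Finset.sum_const, nsmul_eq_mul]
        simp only [Pi.smul_apply, smul_eq_mul, hv, if_pos hx]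
        rw [← hbb]
        linear_combination (-Real.sqrt a) * Real.mul_self_sqrt hb0.le
      · by_cases hx2 : x ∈ T
        · rw [hmv, Finset.sum_congr rfl fun y _ => by rw [hrow_T x hx2 y]]
          have : ∀ y : V, (if y ∈ S then (1:ℝ) else 0) * v y
              = if y ∈ S then Real.sqrt b else 0 := by
            intro y
            by_cases hy : y ∈ S
            · simp [hy, hv]
            · simp [hy]
          rw [Finset.sum_congr rfl fun y _ => this y, ← Finset.sum_filter,
            Finset.sum_const, nsmul_eq_mul]
          simp only [Pi.smul_apply, smul_eq_mul, hv, if_neg hx, if_pos hx2]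
          rw [← haa]
          linear_combination (-Real.sqrt b) * Real.mul_self_sqrt ha0.le
        · rw [hmv, Finset.sum_congr rfl fun y _ => by rw [hrow_0 x hx hx2 y]]
          simp only [Pi.smul_apply, smul_eq_mul, hv, if_neg hx, if_neg hx2]
          simp
    have hvne : v ≠ 0 := by
      have : ∃ x, x ∈ S := by
        by_contra h
        push_neg at h
        have : (univ.filter (fun x => x ∈ S)) = ∅ := by
          apply Finset.filter_false_of_mem
          intro x _
          exact h x
        rw [haa, this] at ha0
        simp at ha0
      obtain ⟨x, hx⟩ := this
      intro hcon
      have := congrFun hcon x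
      simp only [hv, Pi.zero_apply, if_pos hx] at this
      exact (Real.sqrt_pos.mpr hb0).ne' this
    have hmem : Real.sqrt (G.edgeFinset.card : ℝ) ∈ spectrum ℝ (G.adjMatrix ℝ) :=
      mem_spectrum_of_eigenvector G _ v hvne heig
    rw [specRad_eq]
    refine le_antisymm ?_ (le_csSup (Matrix.finite_spectrum _).bddAbove hmem)
    rw [← specRad_eq]
    exact specRad_le G hbip

end Stmt17Aux

theorem stmt17 {V : Type*} [Fintype V] [DecidableEq V]
    (G : SimpleGraph V) [DecidableRel G.Adj]
    (hbip : G.Colorable 2) (e : ℕ) (hcard : G.edgeFinset.card = e) :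
    specRad G ≤ Real.sqrt (e : ℝ) ∧
    (specRad G = Real.sqrt (e : ℝ) ↔ ∃ S T : Set V, Disjoint S T ∧
      ∀ x y : V, G.Adj x y ↔ (x ∈ S ∧ y ∈ T) ∨ (x ∈ T ∧ y ∈ S)) := by
  subst hcard
  have C := hbip.some
  have hc : ∀ x y, G.Adj x y → C x ≠ C y := fun x y h => C.valid h
  refine ⟨Stmt17Aux.specRad_le G hbip, ?_, ?_⟩
  · intro heq
    by_cases h0 : G.edgeFinset.card = 0
    · refine ⟨∅, ∅, Set.disjoint_empty _, fun x y => ?_⟩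
      have hempty : G.edgeFinset = ∅ := Finset.card_eq_zero.mp h0
      constructor
      · intro hxy
        have : s(x, y) ∈ G.edgeFinset := SimpleGraph.mem_edgeFinset.mpr hxy
        rw [hempty] at this
        exact absurd this (Finset.notMem_empty _)
      · rintro (⟨h, -⟩ | ⟨h, -⟩) <;> exact h.elim
    · rw [Stmt17Aux.specRad_eq] at heq
      exact Stmt17Aux.complete_of_eq G hc h0 heq
  · rintro ⟨S, T, hd, hadj⟩
    exact Stmt17Aux.specRad_of_complete G hbip S T hd hadj
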